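/- Let H be a finite loopless multigraph with k edges, exactly 3k/2 vertices (so k is even), no isolated vertices, and no isolated edge. Then H is a disjoint union of k/2 'stars': every connected component has exactly 3 vertices and exactly 2 edges. -/

import Mathlib

open Finset SimpleGraph

/-- A finite loopless multigraph with `k` edges, exactly `3k/2` vertices, no isolated
vertices and no isolated edge, is a disjoint union of two-edge stars: every connected
component (of the underlying adjacency graph) has exactly 3 vertices and exactly 2 edges. -/
theorem stmt_6 {V : Type*} [Fintype V] {k : ℕ} (e : Fin k → V × V)
    (hloopless : ∀ a, (e a).1 ≠ (e a).2)
    (hnoisovert : ∀ v : V, ∃ a, v = (e a).1 ∨ v = (e a).2)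
    (hcard : 2 * Fintype.card V = 3 * k)
    (hnoisoedge : ¬ ∃ a, ∀ b, b ≠ a →
      ({(e a).1, (e a).2} ∩ {(e b).1, (e b).2} : Set V) = ∅)
    (G : SimpleGraph V)
    (hG : G = SimpleGraph.fromRel (fun v w => ∃ a, (e a).1 = v ∧ (e a).2 = w)) :
    ∀ c : G.ConnectedComponent,
      Nat.card {v : V // G.connectedComponentMk v = c} = 3 ∧
      Nat.card {a : Fin k // G.connectedComponentMk (e a).1 = c} = 2 := by
  classical
  push_neg at hnoisoedge
  -- endpoints of every multigraph edge are adjacent in G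
  have hadj : ∀ a, G.Adj (e a).1 (e a).2 := by
    intro a
    rw [hG, SimpleGraph.fromRel_adj]
    exact ⟨hloopless a, Or.inl ⟨a, rfl, rfl⟩⟩
  have hmk : ∀ a, G.connectedComponentMk (e a).1 = G.connectedComponentMk (e a).2 :=
    fun a => ConnectedComponent.connectedComponentMk_eq_of_adj (hadj a)
  -- every adjacency comes from a multigraph edge
  have hadj_exists : ∀ {v w : V}, G.Adj v w →
      ∃ a, ((e a).1 = v ∧ (e a).2 = w) ∨ ((e a).1 = w ∧ (e a).2 = v) := by
    intro v w h
    rw [hG, SimpleGraph.fromRel_adj] at h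
    rcases h.2 with ⟨a, h1, h2⟩ | ⟨a, h1, h2⟩
    · exact ⟨a, Or.inl ⟨h1, h2⟩⟩
    · exact ⟨a, Or.inr ⟨h1, h2⟩⟩
  set N : G.ConnectedComponent → ℕ :=
    fun c => (univ.filter fun v => G.connectedComponentMk v = c).card with hN
  set M : G.ConnectedComponent → ℕ :=
    fun c => (univ.filter fun a => G.connectedComponentMk (e a).1 = c).card with hM
  -- every component contains at least two multigraph edges
  have hM2 : ∀ c, 2 ≤ M c := by
    intro c
    obtain ⟨v, hv⟩ := c.exists_rep
    obtain ⟨a₀, ha₀⟩ := hnoisovert v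
    have ha₀c : G.connectedComponentMk (e a₀).1 = c := by
      rcases ha₀ with h | h
      · rw [← h]; exact hv
      · rw [hmk a₀, ← h]; exact hv
    obtain ⟨b, hbne, hb⟩ := hnoisoedge a₀
    obtain ⟨x, hx₀, hxb⟩ := hb
    have hxc : G.connectedComponentMk x = c := by
      rcases hx₀ with h | h
      · rw [h]; exact ha₀c
      · rw [Set.mem_singleton_iff] at h; rw [h, ← hmk a₀]; exact ha₀c
    have hbc : G.connectedComponentMk (e b).1 = c := by
      rcases hxb with h | h
      · rw [← h]; exact hxc
      · rw [Set.mem_singleton_iff] at h; rw [hmk b, ← h]; exact hxc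
    have : 1 < (univ.filter fun a => G.connectedComponentMk (e a).1 = c).card := by
      rw [Finset.one_lt_card]
      exact ⟨a₀, by simpa using ha₀c, b, by simpa using hbc, fun h => hbne h.symm⟩
    exact this
  -- every component has at most one more vertex than edges
  have hNM : ∀ c, N c ≤ M c + 1 := by
    intro c
    obtain ⟨v0, hv0⟩ := c.exists_rep
    set A : Finset V := univ.filter fun v => G.connectedComponentMk v = c with hA
    set B : Finset (Fin k) :=
      univ.filter fun a => G.connectedComponentMk (e a).1 = c with hB
    have hv0A : v0 ∈ A := by simp only [hA, Finset.mem_filter, Finset.mem_univ, true_and]; exact hv0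
    have hBne : B.Nonempty := by
      rw [← Finset.card_pos]
      have := hM2 c
      simp only [hM] at this
      simp only [hB]
      omega
    have hknon : Nonempty (Fin k) := ⟨hBne.choose⟩
    have key : ∀ v ∈ A.erase v0, ∃ a : Fin k,
        (((e a).1 = v ∧ G.dist (e a).2 v0 < G.dist v v0) ∨
         ((e a).2 = v ∧ G.dist (e a).1 v0 < G.dist v v0)) := by
      intro v hv
      have hvne : v ≠ v0 := (Finset.mem_erase.mp hv).1
      have hvc : G.connectedComponentMk v = c := by
        have := (Finset.mem_erase.mp hv).2
        simpa [hA] using this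
      have hreach : G.Reachable v v0 :=
        ConnectedComponent.exact (hvc.trans hv0.symm)
      have hdpos : 0 < G.dist v v0 := hreach.pos_dist_of_ne hvne
      obtain ⟨p, hp⟩ := hreach.exists_walk_length_eq_dist
      cases p with
      | nil => simp at hp; simp at hdpos
      | @cons _ u _ h q =>
        have hdu : G.dist u v0 < G.dist v v0 := by
          have h1 := G.dist_le q
          have h2 : q.length + 1 = G.dist v v0 := by
            simpa [SimpleGraph.Walk.length_cons] using hp
          omega
        obtain ⟨a, ha⟩ := hadj_exists h
        rcases ha with ⟨h1, h2⟩ | ⟨h1, h2⟩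
        · exact ⟨a, Or.inl ⟨h1, by rw [h2]; exact hdu⟩⟩
        · exact ⟨a, Or.inr ⟨h2, by rw [h1]; exact hdu⟩⟩
    choose f hf using key
    set f' : V → Fin k := fun v =>
      if h : v ∈ A.erase v0 then f v h else Classical.arbitrary _ with hf'
    have hcard_le : (A.erase v0).card ≤ B.card := by
      apply Finset.card_le_card_of_injOn f'
      · intro v hv
        have hfv := hf v hv
        simp only [hf', Finset.mem_coe, dif_pos (Finset.mem_coe.mp hv)]
        have hvc : G.connectedComponentMk v = c := by
          have := (Finset.mem_erase.mp hv).2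
          simpa [hA] using this
        rcases hfv with ⟨h1, _⟩ | ⟨h1, _⟩
        · simp only [hB, Finset.mem_filter, Finset.mem_univ, true_and]
          rw [h1]; exact hvc
        · simp only [hB, Finset.mem_filter, Finset.mem_univ, true_and]
          rw [hmk, h1]; exact hvc
      · intro v hv w hw hvw
        simp only [Finset.mem_coe] at hv hw
        simp only [hf', dif_pos hv, dif_pos hw] at hvw
        have hfv := hf v hv
        have hfw := hf w hw
        rw [hvw] at hfv
        rcases hfv with ⟨hv1, hv2⟩ | ⟨hv1, hv2⟩ <;>
          rcases hfw with ⟨hw1, hw2⟩ | ⟨hw1, hw2⟩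
        · rw [← hv1, hw1]
        · rw [hw1] at hv2; rw [hv1] at hw2; omega
        · rw [hw1] at hv2; rw [hv1] at hw2; omega
        · rw [← hv1, hw1]
    have hAe : (A.erase v0).card = A.card - 1 := Finset.card_erase_of_mem hv0A
    have hA1 : 1 ≤ A.card := Finset.card_pos.mpr ⟨v0, hv0A⟩
    simp only [hN, hM]
    simp only [hA] at hAe hA1 hcard_le
    simp only [hB] at hcard_le
    omega
  -- sum identities
  have hsumN : ∑ c : G.ConnectedComponent, N c = Fintype.card V := by
    rw [← Finset.card_univ]
    exact (Finset.card_eq_sum_card_fiberwise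
      (f := fun v => G.connectedComponentMk v) (fun v _ => Finset.mem_univ _)).symm
  have hsumM : ∑ c : G.ConnectedComponent, M c = k := by
    rw [← Fintype.card_fin k, ← Finset.card_univ]
    exact (Finset.card_eq_sum_card_fiberwise
      (f := fun a => G.connectedComponentMk (e a).1) (fun a _ => Finset.mem_univ _)).symm
  have hle : ∀ c ∈ (univ : Finset G.ConnectedComponent), 2 * N c ≤ 3 * M c := by
    intro c _
    have := hM2 c
    have := hNM c
    omega
  have hsums : ∑ c : G.ConnectedComponent, 2 * N c = ∑ c : G.ConnectedComponent, 3 * M c := by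
    rw [← Finset.mul_sum, ← Finset.mul_sum, hsumN, hsumM, hcard]
  have heq := (Finset.sum_eq_sum_iff_of_le hle).mp hsums
  intro c
  have h1 : 2 * N c = 3 * M c := heq c (Finset.mem_univ c)
  have h2 := hM2 c
  have h3 := hNM c
  have hNc : N c = 3 ∧ M c = 2 := by omega
  constructor
  · rw [Nat.card_eq_fintype_card, Fintype.card_subtype]
    exact hNc.1
  · rw [Nat.card_eq_fintype_card, Fintype.card_subtype]
    exact hNc.2
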